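/- arXiv:2402.18863 — 2 statements merged into one kernel-verified Lean document; each statement's English description precedes it below -/
import Mathlib

section
/- If f : U → ℝⁿ is L-Lipschitz and differentiable along straight-line paths, then for any base point x' and any two points x, y in U, the Integrated Gradients attributions satisfy ‖IG(x,x') − IG(y,x')‖ ≤ L√n·‖x−y‖ + 2L√n·‖y−x'‖. -/
open intervalIntegral

/-- Integrated Gradients attribution of `f` at `x` with base point `x'`:
`IG(x,x') = (x − x') ⊙ ∫₀¹ ∇f((1−α)x' + αx) dα` (Hadamard product). -/
noncomputable def IG {n : ℕ} (f : EuclideanSpace ℝ (Fin n) → ℝ)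
    (x x' : EuclideanSpace ℝ (Fin n)) : EuclideanSpace ℝ (Fin n) :=
  (WithLp.equiv 2 (Fin n → ℝ)).symm fun i =>
    (x i - x' i) * ∫ α in (0:ℝ)..1, gradient f ((1 - α) • x' + α • x) i

lemma euclidean_abs_apply_le_norm {n : ℕ} (z : EuclideanSpace ℝ (Fin n)) (i : Fin n) :
    |z i| ≤ ‖z‖ := by
  rw [EuclideanSpace.norm_eq]
  have h1 : |z i| = Real.sqrt (‖z i‖ ^ 2) := by
    rw [Real.sqrt_sq_eq_abs, abs_norm, Real.norm_eq_abs]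
  rw [h1]
  apply Real.sqrt_le_sqrt
  exact Finset.single_le_sum (f := fun j => ‖z j‖ ^ 2)
    (fun j _ => by positivity) (Finset.mem_univ i)

lemma euclidean_norm_le_of_abs_le {n : ℕ} (u w : EuclideanSpace ℝ (Fin n)) (c : ℝ)
    (hc : 0 ≤ c) (h : ∀ i, |u i| ≤ c * |w i|) : ‖u‖ ≤ c * ‖w‖ := by
  rw [EuclideanSpace.norm_eq, EuclideanSpace.norm_eq]
  rw [show c = Real.sqrt (c ^ 2) by rw [Real.sqrt_sq hc], ← Real.sqrt_mul (by positivity)]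
  apply Real.sqrt_le_sqrt
  rw [Finset.mul_sum]
  apply Finset.sum_le_sum
  intro i _
  have := h i
  calc ‖u i‖ ^ 2 = |u i| ^ 2 := by rw [Real.norm_eq_abs]
    _ ≤ (c * |w i|) ^ 2 := by
        apply sq_le_sq' <;> nlinarith [abs_nonneg (u i), abs_nonneg (w i)]
    _ = c ^ 2 * ‖w i‖ ^ 2 := by rw [mul_pow, Real.norm_eq_abs]

lemma norm_gradient_le_of_lip {n : ℕ} (f : EuclideanSpace ℝ (Fin n) → ℝ) (L : ℝ) (hL : 0 ≤ L)
    (hf : ∀ a b : EuclideanSpace ℝ (Fin n), ‖f a - f b‖ ≤ L * ‖a - b‖)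
    (z : EuclideanSpace ℝ (Fin n)) : ‖gradient f z‖ ≤ L := by
  have h1 : ‖gradient f z‖ = ‖fderiv ℝ f z‖ := by
    rw [gradient]
    exact LinearIsometryEquiv.norm_map _ _
  rw [h1]
  exact norm_fderiv_le_of_lip' ℝ hL (Filter.Eventually.of_forall fun a => hf a z)

/-- If `f : ℝⁿ → ℝ` is `L`-Lipschitz and differentiable along the straight-line paths from the
base point `x'` to `x` and to `y`, then the Integrated Gradients attributions satisfy
`‖IG(x,x') − IG(y,x')‖ ≤ L√n‖x−y‖ + 2L√n‖y−x'‖`. -/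
theorem ig_astuteness_bound {n : ℕ} (f : EuclideanSpace ℝ (Fin n) → ℝ) (L : ℝ) (hL : 0 ≤ L)
    (hf : ∀ a b : EuclideanSpace ℝ (Fin n), ‖f a - f b‖ ≤ L * ‖a - b‖)
    (x' x y : EuclideanSpace ℝ (Fin n))
    (hdiffx : ∀ α ∈ Set.Icc (0:ℝ) 1, DifferentiableAt ℝ f ((1 - α) • x' + α • x))
    (hdiffy : ∀ α ∈ Set.Icc (0:ℝ) 1, DifferentiableAt ℝ f ((1 - α) • x' + α • y)) :
    ‖IG f x x' - IG f y x'‖ ≤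
      L * Real.sqrt n * ‖x - y‖ + 2 * L * Real.sqrt n * ‖y - x'‖ := by
  rcases Nat.eq_zero_or_pos n with hn | hn
  · subst hn
    have : IG f x x' - IG f y x' = 0 := Subsingleton.elim _ _
    rw [this, norm_zero]
    simp only [Nat.cast_zero, Real.sqrt_zero, mul_zero, zero_mul, add_zero]
    positivity
  -- component gradient bound
  have hgrad : ∀ (z : EuclideanSpace ℝ (Fin n)) (i : Fin n), |gradient f z i| ≤ L :=
    fun z i => le_trans (euclidean_abs_apply_le_norm _ i)
      (norm_gradient_le_of_lip f L hL hf z)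
  set A : Fin n → ℝ := fun i => ∫ α in (0:ℝ)..1, gradient f ((1 - α) • x' + α • x) i with hA
  set B : Fin n → ℝ := fun i => ∫ α in (0:ℝ)..1, gradient f ((1 - α) • x' + α • y) i with hB
  have hAle : ∀ i, |A i| ≤ L := by
    intro i
    have := intervalIntegral.norm_integral_le_of_norm_le_const
      (a := (0:ℝ)) (b := 1) (C := L)
      (f := fun α => gradient f ((1 - α) • x' + α • x) i)
      (fun α _ => by simpa [Real.norm_eq_abs] using hgrad ((1 - α) • x' + α • x) i)
    simpa [Real.norm_eq_abs] using this
  have hBle : ∀ i, |B i| ≤ L := by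
    intro i
    have := intervalIntegral.norm_integral_le_of_norm_le_const
      (a := (0:ℝ)) (b := 1) (C := L)
      (f := fun α => gradient f ((1 - α) • x' + α • y) i)
      (fun α _ => by simpa [Real.norm_eq_abs] using hgrad ((1 - α) • x' + α • y) i)
    simpa [Real.norm_eq_abs] using this
  set u : EuclideanSpace ℝ (Fin n) :=
    (WithLp.equiv 2 (Fin n → ℝ)).symm fun i => (x i - y i) * A i with hu
  set v : EuclideanSpace ℝ (Fin n) :=
    (WithLp.equiv 2 (Fin n → ℝ)).symm fun i => (y i - x' i) * (A i - B i) with hv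
  have hdecomp : IG f x x' - IG f y x' = u + v := by
    apply PiLp.ext
    intro i
    simp only [IG, hu, hv, PiLp.sub_apply, PiLp.add_apply, WithLp.equiv_symm_apply, PiLp.toLp_apply, ← hA, ← hB]
    ring
  have hun : ‖u‖ ≤ L * ‖x - y‖ := by
    apply euclidean_norm_le_of_abs_le _ (x - y) L hL
    intro i
    simp only [hu, WithLp.equiv_symm_apply, PiLp.toLp_apply, PiLp.sub_apply, abs_mul]
    rw [mul_comm L]
    exact mul_le_mul_of_nonneg_left (hAle i) (abs_nonneg _)
  have hvn : ‖v‖ ≤ (2 * L) * ‖y - x'‖ := by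
    apply euclidean_norm_le_of_abs_le _ (y - x') (2 * L) (by positivity)
    intro i
    simp only [hv, WithLp.equiv_symm_apply, PiLp.toLp_apply, PiLp.sub_apply, abs_mul]
    rw [mul_comm (2 * L)]
    refine mul_le_mul_of_nonneg_left ?_ (abs_nonneg _)
    calc |A i - B i| ≤ |A i| + |B i| := abs_sub _ _
      _ ≤ L + L := add_le_add (hAle i) (hBle i)
      _ = 2 * L := by ring
  have hsqrt : (1:ℝ) ≤ Real.sqrt n := by
    rw [show (1:ℝ) = Real.sqrt 1 by simp]
    exact Real.sqrt_le_sqrt (by exact_mod_cast hn)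
  calc ‖IG f x x' - IG f y x'‖ = ‖u + v‖ := by rw [hdecomp]
    _ ≤ ‖u‖ + ‖v‖ := norm_add_le _ _
    _ ≤ L * ‖x - y‖ + (2 * L) * ‖y - x'‖ := add_le_add hun hvn
    _ ≤ L * Real.sqrt n * ‖x - y‖ + 2 * L * Real.sqrt n * ‖y - x'‖ := by
        have h1 : L * ‖x - y‖ ≤ L * Real.sqrt n * ‖x - y‖ := by
          calc L * ‖x - y‖ = L * ‖x - y‖ * 1 := by ring
            _ ≤ L * ‖x - y‖ * Real.sqrt n := by
                exact mul_le_mul_of_nonneg_left hsqrt (mul_nonneg hL (norm_nonneg _))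
            _ = L * Real.sqrt n * ‖x - y‖ := by ring
        have h2 : (2 * L) * ‖y - x'‖ ≤ 2 * L * Real.sqrt n * ‖y - x'‖ := by
          calc (2 * L) * ‖y - x'‖ = (2 * L) * ‖y - x'‖ * 1 := by ring
            _ ≤ (2 * L) * ‖y - x'‖ * Real.sqrt n := by
                exact mul_le_mul_of_nonneg_left hsqrt
                  (mul_nonneg (by positivity) (norm_nonneg _))
            _ = 2 * L * Real.sqrt n * ‖y - x'‖ := by ring
        linarith
end

section
/- Under the hypotheses of the LIME setup, the LIME local surrogates satisfy ‖g_x(x) − g_y(y)‖ ≤ C + L‖x−y‖ where C = 2√(2|D| + L²r²), for all x, y with ‖x−y‖ ≤ r. -/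
open Finset

lemma lime_fit_bound {E F : Type*} [DecidableEq E] [NormedAddCommGroup E]
    [NormedAddCommGroup F]
    (D : Finset E) (f : E → F) (L r : ℝ) (hL : 0 ≤ L) (hr : 0 < r)
    (hbd : ∀ a b : E, ‖f a - f b‖ ^ 2 ≤ 2)
    (π : E → E → ℝ) (hπ0 : ∀ a b, 0 ≤ π a b) (hπ1 : ∀ a b, π a b ≤ 1)
    (hπd : ∀ a, π a a = 1)
    (z : E) (S : Finset E) (hSD : S ⊆ D) (hzS : z ∈ S)
    (g : E → F)
    (hmin : ∑ a ∈ S, π z a * ‖f a - g a‖ ^ 2 ≤ ∑ a ∈ S, π z a * ‖f a - f z‖ ^ 2) :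
    ‖f z - g z‖ ≤ Real.sqrt (2 * D.card + L ^ 2 * r ^ 2) := by
  have hsq : ‖f z - g z‖ ^ 2 ≤ 2 * D.card + L ^ 2 * r ^ 2 := by
    have h1 : ‖f z - g z‖ ^ 2 ≤ ∑ a ∈ S, π z a * ‖f a - g a‖ ^ 2 := by
      calc ‖f z - g z‖ ^ 2 = π z z * ‖f z - g z‖ ^ 2 := by rw [hπd]; ring
        _ ≤ ∑ a ∈ S, π z a * ‖f a - g a‖ ^ 2 :=
          Finset.single_le_sum (f := fun a => π z a * ‖f a - g a‖ ^ 2)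
            (fun a _ => mul_nonneg (hπ0 z a) (sq_nonneg _)) hzS
    have h2 : ∑ a ∈ S, π z a * ‖f a - f z‖ ^ 2 ≤ 2 * D.card := by
      have herase : ∑ a ∈ S, π z a * ‖f a - f z‖ ^ 2
          = ∑ a ∈ S.erase z, π z a * ‖f a - f z‖ ^ 2 := by
        rw [← Finset.sum_erase_add _ _ hzS]
        simp
      rw [herase]
      calc ∑ a ∈ S.erase z, π z a * ‖f a - f z‖ ^ 2
          ≤ ∑ _a ∈ S.erase z, 2 := by
            refine Finset.sum_le_sum fun a _ => ?_
            calc π z a * ‖f a - f z‖ ^ 2 ≤ 1 * 2 :=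
              mul_le_mul (hπ1 z a) (hbd a z) (sq_nonneg _) zero_le_one
            _ = 2 := one_mul 2
        _ = 2 * (S.erase z).card := by rw [Finset.sum_const]; ring
        _ ≤ 2 * D.card := by
            have : (S.erase z).card ≤ D.card :=
              Finset.card_le_card ((Finset.erase_subset z S).trans hSD)
            exact_mod_cast mul_le_mul_of_nonneg_left (Nat.cast_le.mpr this) (by norm_num)
    have h3 : (0:ℝ) ≤ L ^ 2 * r ^ 2 := mul_nonneg (sq_nonneg _) (sq_nonneg _)
    linarith
  have := Real.sqrt_le_sqrt hsq
  rwa [Real.sqrt_sq (norm_nonneg _)] at this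

/-- LIME robustness bound: under the LIME setup (with `f` `L`-Lipschitz, outputs with
`‖f(x)−f(y)‖² ≤ 2`, kernel `0 ≤ π ≤ 1` with `π(z,z)=1`, neighbourhoods `S_z ⊆ D` finite
containing `z` with `|S_z| ≤ |D|+1`, and `g_x`, `g_y` minimizers of the local weighted
least-squares losses over a class containing constants), for all `x, y` with `‖x−y‖ ≤ r`,
`‖g_x(x) − g_y(y)‖ ≤ C + L‖x−y‖` where `C = 2√(2|D| + L²r²)`. -/
theorem lime_surrogate_stability {E F : Type*} [DecidableEq E] [NormedAddCommGroup E]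
    [NormedAddCommGroup F]
    (D : Finset E) (f : E → F) (L r : ℝ) (hL : 0 ≤ L) (hr : 0 < r)
    (hlip : ∀ a b : E, ‖f a - f b‖ ≤ L * ‖a - b‖)
    (hbd : ∀ a b : E, ‖f a - f b‖ ^ 2 ≤ 2)
    (π : E → E → ℝ) (hπ0 : ∀ a b, 0 ≤ π a b) (hπ1 : ∀ a b, π a b ≤ 1)
    (hπd : ∀ a, π a a = 1)
    (x y : E)
    (Sx Sy : Finset E) (hSxD : Sx ⊆ D) (hxSx : x ∈ Sx) (hcardx : Sx.card ≤ D.card + 1)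
    (hSyD : Sy ⊆ D) (hySy : y ∈ Sy) (hcardy : Sy.card ≤ D.card + 1)
    (G : Set (E → F)) (hG : ∀ c : F, (fun _ => c) ∈ G)
    (gx : E → F) (hgx : gx ∈ G)
    (hminx : ∀ h ∈ G,
      ∑ a ∈ Sx, π x a * ‖f a - gx a‖ ^ 2 ≤ ∑ a ∈ Sx, π x a * ‖f a - h a‖ ^ 2)
    (gy : E → F) (hgy : gy ∈ G)
    (hminy : ∀ h ∈ G,
      ∑ a ∈ Sy, π y a * ‖f a - gy a‖ ^ 2 ≤ ∑ a ∈ Sy, π y a * ‖f a - h a‖ ^ 2)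
    (hxy : ‖x - y‖ ≤ r) :
    ‖gx x - gy y‖ ≤ 2 * Real.sqrt (2 * D.card + L ^ 2 * r ^ 2) + L * ‖x - y‖ := by
  have hx := lime_fit_bound D f L r hL hr hbd π hπ0 hπ1 hπd x Sx hSxD hxSx gx
    (hminx (fun _ => f x) (hG (f x)))
  have hy := lime_fit_bound D f L r hL hr hbd π hπ0 hπ1 hπd y Sy hSyD hySy gy
    (hminy (fun _ => f y) (hG (f y)))
  have htri : ‖gx x - gy y‖ ≤ ‖f x - gx x‖ + ‖f y - gy y‖ + ‖f x - f y‖ := by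
    have : gx x - gy y = -(f x - gx x) + (f y - gy y) + (f x - f y) := by abel
    rw [this]
    calc ‖-(f x - gx x) + (f y - gy y) + (f x - f y)‖
        ≤ ‖-(f x - gx x) + (f y - gy y)‖ + ‖f x - f y‖ := norm_add_le _ _
      _ ≤ ‖-(f x - gx x)‖ + ‖f y - gy y‖ + ‖f x - f y‖ := by
          gcongr; exact norm_add_le _ _
      _ = ‖f x - gx x‖ + ‖f y - gy y‖ + ‖f x - f y‖ := by rw [norm_neg]
  have hfxy : ‖f x - f y‖ ≤ L * ‖x - y‖ := hlip x y
  linarith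
end
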